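/- Let p and p + 2 both be prime and k = 2p + 1. Then the permutation σ of [k] with σ(2) = 2p, σ(2p) = 2, σ(p) = p+2, σ(p+2) = p, and σ(i) = i otherwise, is weakly consecutive. -/

import Mathlib

/-- A permutation `σ` of `[k] = {1,…,k}` is weakly consecutive if for all
`i, j ∈ [k]` and integers `m`, whenever `m ∣ σ i` and `m ∣ (i - j)`, then `m ∣ σ j`. -/
def IsWCS (k : ℕ) (σ : ℕ → ℕ) : Prop :=
  Set.BijOn σ (Set.Icc 1 k) (Set.Icc 1 k) ∧
  ∀ (m : ℕ) (i j : ℕ), i ∈ Set.Icc 1 k → j ∈ Set.Icc 1 k →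
    m ∣ σ i → (m : ℤ) ∣ ((i : ℤ) - (j : ℤ)) → m ∣ σ j

theorem twice_twin_prime_plus_one_is_wcs (p : ℕ) (hp : p.Prime) (hp2 : (p + 2).Prime) :
    IsWCS (2 * p + 1) (fun i =>
      if i = 2 then 2 * p else if i = 2 * p then 2
      else if i = p then p + 2 else if i = p + 2 then p else i) := by
  have hpne2 : p ≠ 2 := by rintro rfl; norm_num at hp2
  have hp3 : 3 ≤ p := by have := hp.two_le; omega
  unfold IsWCS
  set f : ℕ → ℕ := (fun i =>
      if i = 2 then 2 * p else if i = 2 * p then 2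
      else if i = p then p + 2 else if i = p + 2 then p else i) with hf
  have e2 : f 2 = 2 * p := by simp [hf]
  have e2p : f (2 * p) = 2 := by
    have h : ¬ (2 * p = 2) := by omega
    simp [hf, h]
  have ep : f p = p + 2 := by
    have h1 : ¬ (p = 2) := hpne2
    have h2 : ¬ (p = 2 * p) := by omega
    simp [hf, h1, h2]
  have ep2 : f (p + 2) = p := by
    have h1 : ¬ (p + 2 = 2) := by omega
    have h2 : ¬ (p + 2 = 2 * p) := by omega
    have h3 : ¬ (p + 2 = p) := by omega
    simp [hf, h1, h2, h3]; omega
  have eo : ∀ x, x ≠ 2 → x ≠ 2 * p → x ≠ p → x ≠ p + 2 → f x = x := by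
    intro x h1 h2 h3 h4; simp [hf, h1, h2, h3, h4]
  have small5 : ∀ (n : ℕ) (x : ℤ), (n : ℤ) ∣ x → -(2 * (n : ℤ)) ≤ x → x ≤ 2 * (n : ℤ) →
      x = -(2 * (n : ℤ)) ∨ x = -(n : ℤ) ∨ x = 0 ∨ x = (n : ℤ) ∨ x = 2 * (n : ℤ) := by
    intro n x hx hl hr
    obtain ⟨t, rfl⟩ := hx
    rcases Nat.eq_zero_or_pos n with h | h
    · subst h; norm_num
    · have hn : (0 : ℤ) < n := by exact_mod_cast h
      have ht2 : t ≤ 2 := by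
        by_contra hc; push_neg at hc
        have := mul_lt_mul_of_pos_left hc hn
        linarith
      have ht1 : -2 ≤ t := by
        by_contra hc; push_neg at hc
        have := mul_lt_mul_of_pos_left hc hn
        linarith
      interval_cases t <;> omega
  have div2p : ∀ n, n ∣ 2 * p → n ∣ 2 ∨ n = p ∨ n = 2 * p := by
    intro n hn
    by_cases hpn : p ∣ n
    · obtain ⟨t, rfl⟩ := hpn
      have h2 : p * t ∣ p * 2 := by rwa [mul_comm 2 p] at hn
      have ht : t ∣ 2 := (mul_dvd_mul_iff_left (hp.pos.ne')).mp h2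
      rcases Nat.prime_two.eq_one_or_self_of_dvd t ht with rfl | rfl
      · right; left; ring
      · right; right; ring
    · left
      have hco : Nat.Coprime n p := ((Nat.Prime.coprime_iff_not_dvd hp).mpr hpn).symm
      exact hco.dvd_of_dvd_mul_right hn
  constructor
  · -- BijOn
    have maps : Set.MapsTo f (Set.Icc 1 (2 * p + 1)) (Set.Icc 1 (2 * p + 1)) := by
      intro x hx
      simp only [Set.mem_Icc] at hx ⊢
      by_cases h1 : x = 2
      · subst h1; rw [e2]; omega
      · by_cases h2 : x = 2 * p
        · subst h2; rw [e2p]; omega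
        · by_cases h3 : x = p
          · subst h3; rw [ep]; omega
          · by_cases h4 : x = p + 2
            · subst h4; rw [ep2]; omega
            · rw [eo x h1 h2 h3 h4]; omega
    have inv : ∀ x ∈ Set.Icc 1 (2 * p + 1), f (f x) = x := by
      intro x _
      by_cases h1 : x = 2
      · subst h1; rw [e2, e2p]
      · by_cases h2 : x = 2 * p
        · subst h2; rw [e2p, e2]
        · by_cases h3 : x = p
          · subst h3; rw [ep, ep2]
          · by_cases h4 : x = p + 2
            · subst h4; rw [ep2, ep]
            · rw [eo x h1 h2 h3 h4, eo x h1 h2 h3 h4]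
    exact Set.InvOn.bijOn ⟨inv, inv⟩ maps maps
  · intro m i j hi hj h1 hd
    simp only [Set.mem_Icc] at hi hj
    have W : ∀ (A B : ℕ) (x c1 c2 : ℤ), m ∣ B → (m : ℤ) ∣ x →
        (A : ℤ) = c1 * (B : ℤ) + c2 * x → m ∣ A := by
      intro A B x c1 c2 hB hx h
      have : (m : ℤ) ∣ (A : ℤ) := by
        rw [h]
        exact dvd_add ((Int.natCast_dvd_natCast.mpr hB).mul_left c1) (hx.mul_left c2)
      exact_mod_cast this
    have F1 : m ∣ 2 → m ∣ j → m ∣ f j := by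
      intro hm2 hmj
      by_cases h1 : j = 2
      · subst h1; rw [e2]; exact Dvd.dvd.mul_right hm2 p
      · by_cases h2 : j = 2 * p
        · subst h2; rw [e2p]; exact hm2
        · by_cases h3 : j = p
          · subst h3; rw [ep]; exact dvd_add hmj hm2
          · by_cases h4 : j = p + 2
            · subst h4; rw [ep2]
              have h := Nat.dvd_sub hmj hm2
              rwa [Nat.add_sub_cancel] at h
            · rw [eo j h1 h2 h3 h4]; exact hmj
    by_cases hi2 : i = 2
    · subst hi2
      rw [e2] at h1
      rcases div2p m h1 with hm2 | hm | rfl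
      · exact F1 hm2 (W j 2 _ 1 (-1) hm2 hd (by push_cast; ring))
      · rw [hm] at hd ⊢
        rcases small5 p _ hd (by push_cast; omega) (by push_cast; omega) with h | h | h | h | h
        · exfalso; push_cast at h; omega
        · have hj' : j = p + 2 := by push_cast at h; omega
          subst hj'; rw [ep2]
        · have hj' : j = 2 := by push_cast at h; omega
          subst hj'; rw [e2]; exact dvd_mul_left p 2
        · exfalso; push_cast at h; omega
        · exfalso; push_cast at h; omega
      · rcases small5 (2 * p) _ hd (by push_cast; omega) (by push_cast; omega) with
          h | h | h | h | h
        · exfalso; push_cast at h; omega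
        · exfalso; push_cast at h; omega
        · have hj' : j = 2 := by push_cast at h; omega
          subst hj'; rw [e2]
        · exfalso; push_cast at h; omega
        · exfalso; push_cast at h; omega
    · by_cases hi2p : i = 2 * p
      · subst hi2p
        rw [e2p] at h1
        exact F1 h1 (W j (2 * p) _ 1 (-1) (Dvd.dvd.mul_right h1 p) hd (by push_cast; ring))
      · by_cases hip : i = p
        · rw [hip] at hd h1
          rw [ep] at h1
          rcases hp2.eq_one_or_self_of_dvd m h1 with rfl | rfl
          · exact one_dvd _
          · rcases small5 (p + 2) _ hd (by push_cast; omega) (by push_cast; omega) with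
              h | h | h | h | h
            · exfalso; push_cast at h; omega
            · exfalso; push_cast at h; omega
            · have hj' : j = p := by push_cast at h; omega
              subst hj'; rw [ep]
            · exfalso; push_cast at h; omega
            · exfalso; push_cast at h; omega
        · by_cases hip2 : i = p + 2
          · subst hip2
            rw [ep2] at h1
            rcases hp.eq_one_or_self_of_dvd m h1 with rfl | hm
            · exact one_dvd _
            · rw [hm] at hd ⊢
              rcases small5 p _ hd (by push_cast; omega) (by push_cast; omega) with
                h | h | h | h | h
              · exfalso; push_cast at h; omega
              · exfalso; push_cast at h; omega
              · have hj' : j = p + 2 := by push_cast at h; omega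
                subst hj'; rw [ep2]
              · have hj' : j = 2 := by push_cast at h; omega
                subst hj'; rw [e2]; exact dvd_mul_left p 2
              · exfalso; push_cast at h; omega
          · -- i is a fixed point
            rw [eo i hi2 hi2p hip hip2] at h1
            have hmj : m ∣ j := W j i _ 1 (-1) h1 hd (by push_cast; ring)
            by_cases hj2 : j = 2
            · subst hj2; rw [e2]; exact Dvd.dvd.mul_right hmj p
            · by_cases hj2p : j = 2 * p
              · subst hj2p; rw [e2p]
                rcases div2p m hmj with hm2 | hm | rfl
                · exact hm2
                · exfalso
                  rw [hm] at h1
                  have hdi : (p : ℤ) ∣ (i : ℤ) - (p : ℤ) :=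
                    dvd_sub (Int.natCast_dvd_natCast.mpr h1) dvd_rfl
                  rcases small5 p _ hdi (by push_cast; omega) (by push_cast; omega) with
                    h | h | h | h | h <;> (push_cast at h; omega)
                · exfalso
                  have hdi : ((2 * p : ℕ) : ℤ) ∣ (i : ℤ) - ((2 * p : ℕ) : ℤ) :=
                    dvd_sub (Int.natCast_dvd_natCast.mpr h1) dvd_rfl
                  rcases small5 (2 * p) _ hdi (by push_cast; omega) (by push_cast; omega) with
                    h | h | h | h | h <;> (push_cast at h; omega)
              · by_cases hjp : j = p
                · rw [hjp] at hmj ⊢; rw [ep]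
                  rcases hp.eq_one_or_self_of_dvd m hmj with rfl | hm
                  · exact one_dvd _
                  · exfalso
                    rw [hm] at h1
                    have hdi : (p : ℤ) ∣ (i : ℤ) - (p : ℤ) :=
                      dvd_sub (Int.natCast_dvd_natCast.mpr h1) dvd_rfl
                    rcases small5 p _ hdi (by push_cast; omega) (by push_cast; omega) with
                      h | h | h | h | h <;> (push_cast at h; omega)
                · by_cases hjp2 : j = p + 2
                  · subst hjp2; rw [ep2]
                    rcases hp2.eq_one_or_self_of_dvd m hmj with rfl | rfl
                    · exact one_dvd _
                    · exfalso
                      have hdi : ((p + 2 : ℕ) : ℤ) ∣ (i : ℤ) - ((p + 2 : ℕ) : ℤ) :=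
                        dvd_sub (Int.natCast_dvd_natCast.mpr h1) dvd_rfl
                      rcases small5 (p + 2) _ hdi (by push_cast; omega) (by push_cast; omega) with
                        h | h | h | h | h <;> (push_cast at h; omega)
                  · rw [eo j hj2 hj2p hjp hjp2]; exact hmj
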